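/- Assume the θ-setup and additionally that N is even and B² ≡ D + 12N (mod 16N). If one of the following conditions is met: (a) D ≡ 1 (mod 8); (b) the 2-adic valuation of D equals 3 and the 2-adic valuation of N equals 1; (c) the 2-adic valuation of D equals 2 and 4 ∣ N; then 8 divides T. Moreover, in case (b) one has 4 ∣ B, and in case (c) one has B ≡ 2 (mod 4). -/

import Mathlib

def oddPart (n : ℤ) : ℤ := n / 2 ^ (padicValInt 2 n)

lemma odd_padicValInt_zero {n : ℤ} (hn : Odd n) : padicValInt 2 n = 0 := by
  apply padicValInt.eq_zero_of_not_dvd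
  have := Int.odd_iff.mp hn
  intro h
  have h2 : (2:ℤ) ∣ n := by exact_mod_cast h
  omega

lemma oddPart_spec (n : ℤ) (hn : n ≠ 0) :
    n = 2 ^ (padicValInt 2 n) * oddPart n ∧ Odd (oddPart n) := by
  set k := padicValInt 2 n with hk
  have hd : (2:ℤ) ^ k ∣ n := padicValInt_dvd n
  have h1 : 2 ^ k * oddPart n = n := Int.mul_ediv_cancel' hd
  refine ⟨h1.symm, ?_⟩
  rw [Int.not_even_iff_odd.symm]
  intro he
  obtain ⟨t, ht⟩ := he
  have h2 : (2:ℤ) ^ (k + 1) ∣ n := ⟨t, by rw [← h1, ht]; ring⟩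
  rcases (padicValInt_dvd_iff (k+1) n).mp h2 with h | h
  · exact hn h
  · exact Nat.not_succ_le_self _ (hk ▸ h)

lemma oddPart_of_odd {n : ℤ} (hn : Odd n) : oddPart n = n := by
  simp [oddPart, odd_padicValInt_zero hn]

lemma intCast_zmod_eq_of_dvd {n : ℕ} {x y : ℤ} (h : (n:ℤ) ∣ x - y) :
    (x : ZMod n) = (y : ZMod n) := by
  have h0 := (ZMod.intCast_zmod_eq_zero_iff_dvd (x - y) n).mpr h
  push_cast at h0
  exact sub_eq_zero.mp h0

lemma zmodB : ∀ u₀ u' v A C₀ p : ZMod 4, u₀*u' + v^2*A*2*C₀ = 1 →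
    u' = p*u₀ → A*p*C₀ = 3 →
    (∃ a, A = 2*a+1) → (∃ w, u₀ = 2*w+1) →
    v*(C₀ - A) = 0 := by decide

lemma zmodC : ∀ u₀ u' v A C₀ p : ZMod 4, u₀*u' = 1 →
    u' = p*u₀ - v*2 → A*p*C₀ = 3 →
    (∃ a, A = 2*a+1) → (∃ w, u₀ = 2*w+1) →
    v*(C₀ - A) = 0 := by decide

lemma zmod16B : ∀ x : ZMod 16, x^2 = 0 →
    (ZMod.castHom (show (4:ℕ) ∣ 16 by norm_num) (ZMod 4)) x = 0 := by decide

lemma zmod16C : ∀ x d : ZMod 16, x^2 = 8*d + 4 →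
    (ZMod.castHom (show (4:ℕ) ∣ 16 by norm_num) (ZMod 4)) x = 2 := by decide

theorem prop412
    (N A B C u v p D Θ T : ℤ)
    (hN : 2 ≤ N) (hA : Int.gcd A N = 1) (hv : v ≠ 0)
    (hp : Prime p) (hp6 : ¬ p ∣ 6 * N)
    (hNC : N ∣ C) (hpC : p ∣ C) (hpu : p ∣ u)
    (hpeq : p = u * (u - v * B) + v ^ 2 * A * C)
    (hD : D = B ^ 2 - 4 * A * C)
    (hΘ : Θ = (N - 1) * v * ((u - v * B) * (C / (N * p)) +
      A * ((u / p) * (1 - (u - v * B) ^ 2) - (u - v * B))))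
    (hT : T = 2 * Θ + 6 * oddPart v * oddPart A * (oddPart N - 1) * ((u - v * B) - 1) +
      3 * (padicValInt 2 N : ℤ) * ((u - v * B) ^ 2 - 1))
    (hNeven : Even N)
    (hB : B ^ 2 ≡ D + 12 * N [ZMOD 16 * N]) :
    ((D ≡ 1 [ZMOD 8] ∨ (padicValInt 2 D = 3 ∧ padicValInt 2 N = 1) ∨
        (padicValInt 2 D = 2 ∧ 4 ∣ N)) → 8 ∣ T) ∧
    ((padicValInt 2 D = 3 ∧ padicValInt 2 N = 1) → 4 ∣ B) ∧
    ((padicValInt 2 D = 2 ∧ 4 ∣ N) → B ≡ 2 [ZMOD 4]) := by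
  have hN0 : N ≠ 0 := by omega
  have hp0 : p ≠ 0 := hp.ne_zero
  have hpN : ¬ p ∣ N := fun h => hp6 (h.mul_left 6)
  -- N*p ∣ C
  have hcop : IsCoprime N p := by
    rw [Int.isCoprime_iff_gcd_eq_one]
    have hppn : Nat.Prime p.natAbs := Int.prime_iff_natAbs_prime.mp hp
    have : ¬ p.natAbs ∣ N.natAbs := fun h => hpN (Int.natAbs_dvd_natAbs.mp h)
    exact Nat.Coprime.symm (hppn.coprime_iff_not_dvd.mpr this)
  obtain ⟨C₀, hC⟩ : N * p ∣ C := hcop.mul_dvd hNC hpC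
  obtain ⟨u₀, hu⟩ := hpu
  have hNp0 : N * p ≠ 0 := mul_ne_zero hN0 hp0
  have hCdiv : C / (N * p) = C₀ := by rw [hC, Int.mul_ediv_cancel_left _ hNp0]
  have hudiv : u / p = u₀ := by rw [hu, Int.mul_ediv_cancel_left _ hp0]
  set u' : ℤ := u - v * B with hu'c
  -- the fundamental identity
  have hid : u₀ * u' + v ^ 2 * A * N * C₀ = 1 := by
    have h0 : p * (u₀ * u' + v ^ 2 * A * N * C₀) = p * 1 := by
      calc p * (u₀ * u' + v ^ 2 * A * N * C₀) = u * u' + v ^ 2 * A * C := by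
            rw [hu, hC]; ring
        _ = p := hpeq.symm
        _ = p * 1 := by ring
    exact mul_left_cancel₀ hp0 h0
  -- A odd
  have hN2 : (2:ℤ) ∣ N := by obtain ⟨m, hm⟩ := hNeven; exact ⟨m, by omega⟩
  have hAodd : Odd A := by
    rcases Int.even_or_odd A with hA2 | h
    · exfalso
      have hAN : IsCoprime A N := Int.isCoprime_iff_gcd_eq_one.mpr hA
      have h2A : (2:ℤ) ∣ A := by obtain ⟨m, hm⟩ := hA2; exact ⟨m, by omega⟩
      have := hAN.isUnit_of_dvd' h2A hN2
      rcases Int.isUnit_iff.mp this with h | h <;> norm_num at h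
    · exact h
  -- u₀, u' odd
  have hu₀u' : Odd (u₀ * u') := by
    obtain ⟨m, hm⟩ := hNeven
    exact ⟨-(v^2*A*m*C₀), by linear_combination hid - v^2*A*C₀*hm⟩
  obtain ⟨hu₀odd, hu'odd⟩ := Int.odd_mul.mp hu₀u'
  -- A*p*C₀ ≡ 3 (mod 4)
  obtain ⟨t0, ht0⟩ := Int.ModEq.dvd hB
  have hApC : (4:ℤ) ∣ A * p * C₀ - 3 := by
    have hcan : N * (4 * (A * p * C₀ - 3) + 16 * t0) = N * 0 := by
      linear_combination -ht0 + hD - 4*A*hC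
    have h0 : 4 * (A * p * C₀ - 3) + 16 * t0 = 0 := mul_left_cancel₀ hN0 hcan
    exact ⟨-t0, by linarith⟩
  obtain ⟨t1, ht1⟩ := hApC
  have hApCodd : Odd (A * p * C₀) := ⟨2*t1 + 1, by linarith⟩
  have hpodd : Odd p := (Int.odd_mul.mp (Int.odd_mul.mp hApCodd).1).2
  have hC₀odd : Odd C₀ := (Int.odd_mul.mp hApCodd).2
  have huodd : Odd u := by rw [hu]; exact hpodd.mul hu₀odd
  -- the main reduction: 4 ∣ v*(C₀ - A) → 8 ∣ T
  have main : (4:ℤ) ∣ v * (C₀ - A) → (8:ℤ) ∣ T := by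
    rintro ⟨k, hk⟩
    obtain ⟨s, hs⟩ := hu'odd
    obtain ⟨e, he⟩ : (8:ℤ) ∣ u' ^ 2 - 1 := by
      obtain ⟨e2, he2⟩ := Int.even_mul_succ_self s
      exact ⟨e2, by linear_combination (u' + 2*s + 1)*hs + 4*he2⟩
    obtain ⟨hNdec, hN₁odd⟩ := oddPart_spec N hN0
    obtain ⟨a, ha⟩ := hN₁odd
    refine ⟨(N-1)*u'*k - 2*(N-1)*v*A*u₀*e + 3*(oddPart v)*A*a*s
      + 3*(padicValInt 2 N : ℤ)*e, ?_⟩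
    rw [hT, hΘ, hCdiv, hudiv, oddPart_of_odd hAodd]
    linear_combination (2*(N-1)*u')*hk + (3*(padicValInt 2 N : ℤ) - 2*(N-1)*v*A*u₀)*he
      + (6*(oddPart v)*A*(u'-1))*ha + (12*(oddPart v)*A*a)*hs
  -- case (a)
  have caseA : D ≡ 1 [ZMOD 8] → (4:ℤ) ∣ v * (C₀ - A) := by
    intro h1
    obtain ⟨w, hw⟩ := Int.ModEq.dvd h1
    obtain ⟨m, hm⟩ := hNeven
    have h8 : B^2 - 1 = 8*(A*m*p*C₀ - w) := by
      linear_combination -hw - hD + 4*A*hC + 4*A*p*C₀*hm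
    have hBodd : Odd B := by
      rcases Int.even_or_odd B with hBe | h
      · exfalso
        obtain ⟨b0, hb0⟩ := hBe
        have h2 : (2:ℤ) ∣ 1 := ⟨2*b0*b0 - 4*(A*m*p*C₀ - w),
          by linear_combination -h8 + (B + b0 + b0)*hb0⟩
        norm_num at h2
      · exact h
    have hvB : Even (v * B) := by
      have h := Odd.sub_odd huodd hu'odd
      have h2 : u - u' = v * B := by rw [hu'c]; ring
      rwa [h2] at h
    have hvev : Even v := (Int.even_mul.mp hvB).resolve_right (Int.not_even_iff_odd.mpr hBodd)
    obtain ⟨x, hx⟩ := hvev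
    obtain ⟨c, hc⟩ := hC₀odd
    obtain ⟨a', ha'⟩ := hAodd
    exact ⟨x*(c - a'), by rw [hx, hc, ha']; ring⟩
  -- case (b) : 4 ∣ B
  have caseB4 : padicValInt 2 D = 3 ∧ padicValInt 2 N = 1 → (4:ℤ) ∣ B := by
    rintro ⟨hD3, hN1⟩
    have hD0 : D ≠ 0 := by
      intro h; rw [h] at hD3; rw [padicValInt.zero] at hD3; exact absurd hD3 (by norm_num)
    obtain ⟨hDdec, hDodd⟩ := oddPart_spec D hD0
    rw [hD3] at hDdec
    obtain ⟨hNdec, hN₁odd⟩ := oddPart_spec N hN0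
    rw [hN1] at hNdec
    obtain ⟨d', hd'⟩ := hDodd
    obtain ⟨m', hm'⟩ := hN₁odd
    have h16 : (16:ℤ) ∣ B^2 := by
      refine ⟨d' + 3*m' + 2 - 2*(oddPart N)*t0, ?_⟩
      linear_combination -ht0 + hDdec + 8*hd' + (12 - 16*t0)*hNdec + 24*hm'
    have hz : ((B : ℤ) : ZMod 16)^2 = 0 := by
      have h0 := (ZMod.intCast_zmod_eq_zero_iff_dvd (B^2) 16).mpr (by exact_mod_cast h16)
      push_cast at h0
      exact h0
    have hB4 : ((B : ℤ) : ZMod 4) = 0 := by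
      have := zmod16B ((B : ℤ) : ZMod 16) hz
      rwa [map_intCast] at this
    exact_mod_cast (ZMod.intCast_zmod_eq_zero_iff_dvd B 4).mp hB4
  -- case (c) : B ≡ 2 (mod 4)
  have caseC2 : padicValInt 2 D = 2 ∧ 4 ∣ N → (4:ℤ) ∣ B - 2 := by
    rintro ⟨hD2, hN4⟩
    have hD0 : D ≠ 0 := by
      intro h; rw [h] at hD2; rw [padicValInt.zero] at hD2; exact absurd hD2 (by norm_num)
    obtain ⟨hDdec, hDodd⟩ := oddPart_spec D hD0
    rw [hD2] at hDdec
    obtain ⟨d', hd'⟩ := hDodd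
    obtain ⟨n0, hn0⟩ := hN4
    have h16 : (16:ℤ) ∣ B^2 - (8*d' + 4) := by
      refine ⟨3*n0 - 4*n0*t0, ?_⟩
      linear_combination -ht0 + hDdec + 4*hd' + (12 - 16*t0)*hn0
    have hz : ((B : ℤ) : ZMod 16)^2 = 8*((d' : ℤ) : ZMod 16) + 4 := by
      have h0 := intCast_zmod_eq_of_dvd (n := 16) h16
      simp only [Int.cast_pow, Int.cast_add, Int.cast_mul, Int.cast_ofNat] at h0
      linear_combination h0
    have hB2 : ((B : ℤ) : ZMod 4) = 2 := by
      have := zmod16C ((B : ℤ) : ZMod 16) ((d' : ℤ) : ZMod 16) hz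
      rwa [map_intCast] at this
    have h0 : ((B - 2 : ℤ) : ZMod 4) = 0 := by push_cast; rw [hB2]; ring
    exact (ZMod.intCast_zmod_eq_zero_iff_dvd (B - 2) 4).mp (by exact_mod_cast h0)
  -- case (b) main divisibility
  have caseB : padicValInt 2 D = 3 ∧ padicValInt 2 N = 1 → (4:ℤ) ∣ v * (C₀ - A) := by
    intro hcb
    obtain ⟨b, hb⟩ := caseB4 hcb
    obtain ⟨hNdec, hN₁odd⟩ := oddPart_spec N hN0
    rw [hcb.2] at hNdec
    obtain ⟨m', hm'⟩ := hN₁odd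
    -- cast facts to ZMod 4
    have z1 : ((u₀:ℤ) : ZMod 4) * ((u':ℤ) : ZMod 4)
        + ((v:ℤ) : ZMod 4)^2 * ((A:ℤ) : ZMod 4) * 2 * ((C₀:ℤ) : ZMod 4) = 1 := by
      have hNz : ((N:ℤ) : ZMod 4) = ((2:ℤ) : ZMod 4) :=
        intCast_zmod_eq_of_dvd ⟨m', by linear_combination hNdec + 2*hm'⟩
      have h0 := congrArg (fun x : ℤ => (x : ZMod 4)) hid
      push_cast at h0 ⊢
      rw [hNz] at h0
      push_cast at h0
      linear_combination h0
    have z2 : ((u':ℤ) : ZMod 4) = ((p:ℤ) : ZMod 4) * ((u₀:ℤ) : ZMod 4) := by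
      have h0 : (4:ℤ) ∣ u' - p*u₀ := ⟨-b*v, by rw [hu'c, hu, hb]; ring⟩
      have := intCast_zmod_eq_of_dvd h0
      push_cast at this
      exact this
    have z3 : ((A:ℤ) : ZMod 4) * ((p:ℤ) : ZMod 4) * ((C₀:ℤ) : ZMod 4) = 3 := by
      have := intCast_zmod_eq_of_dvd (n := 4) ⟨t1, ht1⟩
      push_cast at this
      exact_mod_cast this
    obtain ⟨a', ha'⟩ := hAodd
    obtain ⟨w', hw'⟩ := hu₀odd
    have hz := zmodB _ _ _ _ _ _ z1 z2 z3
      ⟨(a' : ZMod 4), by exact_mod_cast congrArg (fun x : ℤ => (x : ZMod 4)) ha'⟩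
      ⟨(w' : ZMod 4), by exact_mod_cast congrArg (fun x : ℤ => (x : ZMod 4)) hw'⟩
    have : ((v * (C₀ - A) : ℤ) : ZMod 4) = 0 := by push_cast; linear_combination hz
    exact_mod_cast (ZMod.intCast_zmod_eq_zero_iff_dvd (v*(C₀-A)) 4).mp this
  -- case (c) main divisibility
  have caseC : padicValInt 2 D = 2 ∧ 4 ∣ N → (4:ℤ) ∣ v * (C₀ - A) := by
    intro hcc
    obtain ⟨q, hq⟩ := caseC2 hcc
    obtain ⟨n0, hn0⟩ := hcc.2
    have z1 : ((u₀:ℤ) : ZMod 4) * ((u':ℤ) : ZMod 4) = 1 := by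
      have hNz : ((N:ℤ) : ZMod 4) = ((0:ℤ) : ZMod 4) :=
        intCast_zmod_eq_of_dvd ⟨n0, by linear_combination hn0⟩
      have h0 := congrArg (fun x : ℤ => (x : ZMod 4)) hid
      push_cast at h0 ⊢
      rw [hNz] at h0
      push_cast at h0
      linear_combination h0
    have z2 : ((u':ℤ) : ZMod 4) = ((p:ℤ) : ZMod 4) * ((u₀:ℤ) : ZMod 4)
        - ((v:ℤ) : ZMod 4) * 2 := by
      have h0 : (4:ℤ) ∣ u' - (p*u₀ - v*2) := ⟨-v*q, by rw [hu'c, hu]; linear_combination (-v)*hq⟩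
      have := intCast_zmod_eq_of_dvd h0
      push_cast at this
      linear_combination this
    have z3 : ((A:ℤ) : ZMod 4) * ((p:ℤ) : ZMod 4) * ((C₀:ℤ) : ZMod 4) = 3 := by
      have := intCast_zmod_eq_of_dvd (n := 4) ⟨t1, ht1⟩
      push_cast at this
      exact_mod_cast this
    obtain ⟨a', ha'⟩ := hAodd
    obtain ⟨w', hw'⟩ := hu₀odd
    have hz := zmodC _ _ _ _ _ _ z1 z2 z3
      ⟨(a' : ZMod 4), by exact_mod_cast congrArg (fun x : ℤ => (x : ZMod 4)) ha'⟩
      ⟨(w' : ZMod 4), by exact_mod_cast congrArg (fun x : ℤ => (x : ZMod 4)) hw'⟩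
    have : ((v * (C₀ - A) : ℤ) : ZMod 4) = 0 := by push_cast; linear_combination hz
    exact_mod_cast (ZMod.intCast_zmod_eq_zero_iff_dvd (v*(C₀-A)) 4).mp this
  refine ⟨?_, caseB4, ?_⟩
  · rintro (h | h | h)
    · exact main (caseA h)
    · exact main (caseB h)
    · exact main (caseC h)
  · intro h
    rw [Int.modEq_iff_dvd]
    obtain ⟨q, hq⟩ := caseC2 h
    exact ⟨-q, by linarith⟩
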